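/- For every natural number n ≥ 1, nⁿ = n · Σ_{i=1}^{n} C(n−1, i−1) · i^(i−2) · (n−i)^(n−i), where all exponents use truncated natural-number subtraction (so the i = 1 term has i^(i−2) = 1^0 = 1, consistent with the intended value 1^(−1) = 1, and the i = n term has (n−i)^(n−i) = 0^0 = 1). -/

import Mathlib

open Finset Polynomial Function

private lemma fwdDiff_zero_fun : fwdDiff (1:ℚ) (0 : ℚ → ℚ) = 0 := by
  funext x; simp [fwdDiff]

private lemma fwdDiff_eval (P : ℚ[X]) :
    fwdDiff (1:ℚ) (fun x ↦ P.eval x) = fun x ↦ (P.comp (X + Polynomial.C 1) - P).eval x := by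
  funext x
  simp [fwdDiff, Polynomial.eval_comp]

/-- The `n`-th forward difference of a polynomial of degree `< n` vanishes. -/
private lemma vanish : ∀ (n : ℕ) (P : ℚ[X]), P.natDegree < n →
    (fwdDiff (1:ℚ))^[n] (fun x ↦ P.eval x) = 0 := by
  intro n
  induction n with
  | zero => intro P h; omega
  | succ n ih =>
    intro P h
    rw [Function.iterate_succ_apply, fwdDiff_eval]
    set Q := P.comp (X + Polynomial.C 1) - P with hQdef
    rcases eq_or_ne Q 0 with h0 | h0
    · have : (fun x : ℚ ↦ Q.eval x) = 0 := by rw [h0]; funext x; simp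
      rw [this]
      exact Function.iterate_fixed fwdDiff_zero_fun n
    · apply ih
      have hX : (X + Polynomial.C 1 : ℚ[X]).natDegree = 1 := by
        exact Polynomial.natDegree_X_add_C (1:ℚ)
      have hXl : (X + Polynomial.C 1 : ℚ[X]).leadingCoeff = 1 := by
        exact Polynomial.leadingCoeff_X_add_C (1:ℚ)
      have hP0 : P ≠ 0 := by
        intro hp; apply h0; rw [hQdef, hp]; simp
      have hc : (P.comp (X + Polynomial.C 1)).leadingCoeff = P.leadingCoeff := by
        rw [leadingCoeff_comp (by rw [hX]; omega)]; rw [hXl]; simp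
      have hc0 : P.comp (X + Polynomial.C 1) ≠ 0 := by
        intro hz
        apply hP0
        rw [← leadingCoeff_eq_zero, ← hc, hz, leadingCoeff_zero]
      have hdeq : (P.comp (X + Polynomial.C 1)).degree = P.degree := by
        rw [degree_eq_natDegree hc0, degree_eq_natDegree hP0, natDegree_comp]
        rw [hX, mul_one]
      have hlt : Q.degree < P.degree := by
        rw [← hdeq]
        exact degree_sub_lt hdeq hc0 hc
      have := Polynomial.natDegree_lt_natDegree h0 hlt
      omega

/-- The Abel polynomial-type sum `∑ C(n,k) (k+1)^(k-1) (X - k)^(n-k)`. -/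
private noncomputable def absP (n : ℕ) : ℚ[X] :=
  ∑ k ∈ range (n+1),
    Polynomial.C ((n.choose k * (k+1)^(k-1) : ℕ) : ℚ) * (X - Polynomial.C (k:ℚ))^(n-k)

private lemma choose_id (n k : ℕ) (_hk : k ≤ n) :
    (n+1).choose k * (n+1-k) = (n+1) * n.choose k := by
  have h1 := Nat.choose_succ_right_eq (n+1) k
  have h2 := Nat.add_one_mul_choose_eq n k
  rw [h1.symm, ← h2]

private lemma absP_deriv (n : ℕ) :
    (absP (n+1)).derivative = Polynomial.C ((n+1 : ℕ) : ℚ) * absP n := by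
  unfold absP
  rw [derivative_sum, Finset.sum_range_succ, Finset.mul_sum]
  rw [Nat.sub_self, pow_zero, mul_one, derivative_C, add_zero]
  apply Finset.sum_congr rfl
  intro k hk
  rw [Finset.mem_range] at hk
  have hk' : k ≤ n := by omega
  rw [derivative_C_mul, derivative_pow, derivative_sub, derivative_X, derivative_C, sub_zero,
    mul_one]
  have he : n + 1 - k - 1 = n - k := by omega
  rw [he, ← mul_assoc, ← Polynomial.C_mul, ← mul_assoc, ← Polynomial.C_mul]
  congr 2
  have hnat : (n+1).choose k * (k+1)^(k-1) * (n+1-k) = (n+1) * (n.choose k * (k+1)^(k-1)) := by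
    rw [mul_right_comm, choose_id n k hk']
    ring
  exact_mod_cast hnat

private lemma pow_aux (m k : ℕ) (hk : k ≤ m) :
    (k+1)^(k-1) * (k+1)^(m-k) = (k+1)^(m-1) := by
  cases k with
  | zero => simp
  | succ j => rw [← pow_add]; congr 1; omega

private lemma absP_eval_neg_one (n : ℕ) : (absP (n+1)).eval (-1) = 0 := by
  have hv := vanish (n+1) ((X + Polynomial.C 1)^n) (by
    rw [natDegree_pow, natDegree_X_add_C, mul_one]; omega)
  have hs := fwdDiff_iter_eq_sum_shift (1:ℚ)
    (fun x ↦ ((X + Polynomial.C 1 : ℚ[X])^n).eval x) (n+1) 0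
  rw [hv] at hs
  simp only [Pi.zero_apply] at hs
  rw [absP, eval_finset_sum]
  rw [hs]
  apply Finset.sum_congr rfl
  intro k hk
  rw [Finset.mem_range] at hk
  have hp : ((k:ℚ)+1)^(k-1) * ((k:ℚ)+1)^(n+1-k) = ((k:ℚ)+1)^n := by
    exact_mod_cast pow_aux (n+1) k (by omega)
  simp only [eval_mul, eval_C, eval_pow, eval_sub, eval_X, zsmul_eq_mul, eval_add, eval_one,
    nsmul_eq_mul, mul_one, zero_add]
  push_cast
  rw [show (-1 - (k:ℚ)) = -(((k:ℚ))+1) by ring, neg_pow, ← hp]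
  ring

private lemma absP_eq (n : ℕ) : absP n = (X + Polynomial.C 1)^n := by
  induction n with
  | zero => simp [absP]
  | succ n ih =>
    have hd : derivative (absP (n+1) - (X + Polynomial.C 1)^(n+1)) = 0 := by
      rw [derivative_sub, absP_deriv n, ih, derivative_pow, derivative_add, derivative_X,
        derivative_C, add_zero, mul_one, Nat.add_sub_cancel]
      push_cast
      ring
    have hC := eq_C_of_derivative_eq_zero hd
    have he := congrArg (Polynomial.eval (-1 : ℚ)) hC
    rw [eval_sub, absP_eval_neg_one, eval_pow, eval_add, eval_X, eval_C, eval_C] at he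
    have h0 : (0:ℚ) - (-1+1)^(n+1) = 0 := by norm_num
    rw [h0] at he
    rw [← he, Polynomial.C_0] at hC
    exact sub_eq_zero.mp hC

/-- Abel's identity specialization: `∑_{k=0}^m C(m,k) (k+1)^(k-1) (m-k)^(m-k) = (m+1)^m`. -/
private lemma nat_sum (m : ℕ) :
    ∑ k ∈ range (m+1), m.choose k * (k+1)^(k-1) * (m-k)^(m-k) = (m+1)^m := by
  have h := congrArg (Polynomial.eval (m:ℚ)) (absP_eq m)
  rw [absP, eval_finset_sum, eval_pow, eval_add, eval_X, eval_C] at h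
  have h2 : ∑ k ∈ range (m+1),
      (Polynomial.C ((m.choose k * (k+1)^(k-1) : ℕ) : ℚ)
        * (X - Polynomial.C (k:ℚ))^(m-k)).eval (m:ℚ)
      = ((∑ k ∈ range (m+1), m.choose k * (k+1)^(k-1) * (m-k)^(m-k) : ℕ) : ℚ) := by
    push_cast
    apply Finset.sum_congr rfl
    intro k hk
    rw [Finset.mem_range] at hk
    rw [eval_mul, eval_C, eval_pow, eval_sub, eval_X, eval_C,
      ← Nat.cast_sub (show k ≤ m by omega)]
  rw [h2] at h
  exact_mod_cast h

/-- The sequence `n ^ n` satisfies the recurrence for the number of complete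
τ-exceptional sequences over `Λ_n^n`:
`n^n = n * Σ_{i=1}^n C(n-1, i-1) * i^(i-2) * (n-i)^(n-i)` for every `n ≥ 1`. -/
theorem pow_self_recurrence :
    ∀ n : ℕ, 1 ≤ n →
      n ^ n = n * ∑ i ∈ Finset.Icc 1 n,
        Nat.choose (n - 1) (i - 1) * i ^ (i - 2) * (n - i) ^ (n - i) := by
  intro n hn
  obtain ⟨m, rfl⟩ : ∃ m, n = m + 1 := ⟨n - 1, by omega⟩
  have hIcc : ∑ i ∈ Finset.Icc 1 (m+1),
      Nat.choose (m+1-1) (i-1) * i ^ (i-2) * (m+1-i) ^ (m+1-i)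
      = ∑ k ∈ range (m+1), m.choose k * (k+1)^(k-1) * (m-k)^(m-k) := by
    rw [show Finset.Icc 1 (m+1) = Finset.Ico 1 (m+2) by rw [← Finset.Ico_add_one_right_eq_Icc]; rfl,
      Finset.sum_Ico_eq_sum_range]
    apply Finset.sum_congr (by congr 1)
    intro k hk
    congr 1
    · congr 2 <;> omega
    · congr 1 <;> omega
  rw [hIcc, nat_sum]
  rw [← pow_succ']
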